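/- Suppose u = (u₁, u₂, τ), v = (0, v₂, κ) satisfy the homogeneous self-dual embedding Qu = v, u₂ ∈ K*, v₂ ∈ K, τ ≥ 0, κ ≥ 0, τ + κ > 0, and τ > 0. Then x = u₁/τ, y = u₂/τ, s = v₂/τ satisfy the KKT conditions: Ax + s = b, Aᵀy + c = 0, s ∈ K, y ∈ K*, sᵀy = 0. -/

import Mathlib

open Matrix

/-- The skew-symmetric matrix of the homogeneous self-dual embedding,
`Q = [[0, Aᵀ, c], [-A, 0, b], [-cᵀ, -bᵀ, 0]]`, indexed by `Fin n ⊕ (Fin m ⊕ Unit)`. -/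
def embedQ {m n : ℕ} (A : Matrix (Fin m) (Fin n) ℝ) (b : Fin m → ℝ) (c : Fin n → ℝ) :
    Matrix (Fin n ⊕ (Fin m ⊕ Unit)) (Fin n ⊕ (Fin m ⊕ Unit)) ℝ
  | Sum.inl _, Sum.inl _ => 0
  | Sum.inl i, Sum.inr (Sum.inl j) => A j i
  | Sum.inl i, Sum.inr (Sum.inr _) => c i
  | Sum.inr (Sum.inl i), Sum.inl j => -A i j
  | Sum.inr (Sum.inl _), Sum.inr (Sum.inl _) => 0
  | Sum.inr (Sum.inl i), Sum.inr (Sum.inr _) => b i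
  | Sum.inr (Sum.inr _), Sum.inl j => -c j
  | Sum.inr (Sum.inr _), Sum.inr (Sum.inl j) => -b j
  | Sum.inr (Sum.inr _), Sum.inr (Sum.inr _) => 0

/-- If `Qu = v` holds with `τ > 0`, then `(u₁/τ, u₂/τ, v₂/τ)` satisfies the KKT conditions. -/
theorem embed_solution_of_tau_pos
    {m n : ℕ} (A : Matrix (Fin m) (Fin n) ℝ) (b : Fin m → ℝ) (c : Fin n → ℝ)
    (K : Set (Fin m → ℝ)) (hKne : K.Nonempty) (hKcl : IsClosed K) (hKconv : Convex ℝ K)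
    (hKcone : ∀ (t : ℝ), 0 ≤ t → ∀ k ∈ K, t • k ∈ K)
    (u₁ : Fin n → ℝ) (u₂ v₂ : Fin m → ℝ) (τ κ : ℝ)
    (hu₂ : ∀ k ∈ K, 0 ≤ u₂ ⬝ᵥ k) (hv₂ : v₂ ∈ K) (hτ : 0 ≤ τ) (hκ : 0 ≤ κ)
    (hτκ : 0 < τ + κ) (hτpos : 0 < τ)
    (hQuv : embedQ A b c *ᵥ Sum.elim u₁ (Sum.elim u₂ (fun _ => τ))
      = Sum.elim (0 : Fin n → ℝ) (Sum.elim v₂ (fun _ => κ))) :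
    A *ᵥ (τ⁻¹ • u₁) + τ⁻¹ • v₂ = b ∧
    Aᵀ *ᵥ (τ⁻¹ • u₂) + c = 0 ∧
    τ⁻¹ • v₂ ∈ K ∧
    (∀ k ∈ K, 0 ≤ (τ⁻¹ • u₂) ⬝ᵥ k) ∧
    (τ⁻¹ • v₂) ⬝ᵥ (τ⁻¹ • u₂) = 0 := by
  have h1 := fun i => congrFun hQuv (Sum.inl i)
  have h2 := fun i => congrFun hQuv (Sum.inr (Sum.inl i))
  have h3 := congrFun hQuv (Sum.inr (Sum.inr ()))
  simp [embedQ, mulVec, dotProduct, Fintype.sum_sum_type] at h1 h2 h3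
  -- matrix-form versions
  have H1 : Aᵀ *ᵥ u₂ = -(τ • c) := by
    funext i
    have := h1 i
    simp only [mulVec, dotProduct, transpose_apply, Pi.neg_apply, Pi.smul_apply, smul_eq_mul]
    linarith
  have H2 : v₂ = τ • b - A *ᵥ u₁ := by
    funext i
    have := h2 i
    simp only [mulVec, dotProduct, Pi.sub_apply, Pi.smul_apply, smul_eq_mul]
    linarith
  have hvu : v₂ ⬝ᵥ u₂ = -(τ * κ) := by
    have hA : (A *ᵥ u₁) ⬝ᵥ u₂ = u₁ ⬝ᵥ (Aᵀ *ᵥ u₂) := by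
      rw [dotProduct_comm, dotProduct_mulVec, ← mulVec_transpose, dotProduct_comm]
    rw [H2, sub_dotProduct, smul_dotProduct, hA, H1]
    have hb : b ⬝ᵥ u₂ = ∑ x, b x * u₂ x := rfl
    have hc : u₁ ⬝ᵥ -(τ • c) = -(τ * ∑ x, c x * u₁ x) := by
      simp only [dotProduct, Pi.neg_apply, Pi.smul_apply, smul_eq_mul, mul_neg, Finset.mul_sum,
        ← Finset.sum_neg_distrib]
      exact Finset.sum_congr rfl fun x _ => by ring
    rw [hb, hc]
    simp only [smul_eq_mul]
    nlinarith [h3]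
  have hvu0 : v₂ ⬝ᵥ u₂ = 0 := by
    have hge : 0 ≤ v₂ ⬝ᵥ u₂ := by
      rw [dotProduct_comm]; exact hu₂ v₂ hv₂
    nlinarith [mul_nonneg hτ hκ]
  refine ⟨?_, ?_, hKcone τ⁻¹ (by positivity) v₂ hv₂, ?_, ?_⟩
  · rw [mulVec_smul, H2]
    funext i
    simp only [Pi.add_apply, Pi.smul_apply, Pi.sub_apply, smul_eq_mul]
    field_simp
    ring
  · rw [mulVec_smul, H1]
    funext i
    simp only [Pi.add_apply, Pi.smul_apply, Pi.neg_apply, Pi.zero_apply, smul_eq_mul]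
    field_simp
    ring
  · intro k hk
    rw [smul_dotProduct]
    exact mul_nonneg (by positivity) (hu₂ k hk)
  · rw [smul_dotProduct, dotProduct_smul, hvu0]
    simp
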